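/- In a finite ordinal potential game, from every configuration there exists a best response path leading to a recursive Nash equilibrium. -/
import Mathlib


open Function

variable {ι : Type*} [Fintype ι] [DecidableEq ι] {A : ι → Type*} [∀ i, Fintype (A i)]

/-- `a` is a best response action of player `i` to the profile `x₋ᵢ`. -/
def IsBR (u : ι → (∀ i, A i) → ℝ) (i : ι) (x : ∀ i, A i) (a : A i) : Prop :=
  ∀ b : A i, u i (update x i b) ≤ u i (update x i a)

/-- One step of the best response dynamics: a single player switches to a best response. -/
def BRStep (u : ι → (∀ i, A i) → ℝ) (x y : ∀ i, A i) : Prop :=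
  x ≠ y ∧ ∃ i, IsBR u i x (y i) ∧ ∀ j, j ≠ i → y j = x j

/-- A best response path from `x` to `y`. -/
def BRPath (u : ι → (∀ i, A i) → ℝ) : (∀ i, A i) → (∀ i, A i) → Prop :=
  Relation.ReflTransGen (BRStep u)

/-- A configuration is recursive if every configuration reachable from it by a
best response path can reach it back by a best response path. -/
def Recursive (u : ι → (∀ i, A i) → ℝ) (x : ∀ i, A i) : Prop :=
  ∀ y, BRPath u x y → BRPath u y x

/-- `Ψ` is an ordinal potential for the game with utilities `u`. -/
def OrdinalPotential (u : ι → (∀ i, A i) → ℝ) (Ψ : (∀ i, A i) → ℝ) : Prop :=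
  ∀ i (x y : ∀ i, A i), (∀ j, j ≠ i → x j = y j) → (u i x < u i y ↔ Ψ x < Ψ y)

private lemma psi_mono_step (u : ι → (∀ i, A i) → ℝ) (Ψ : (∀ i, A i) → ℝ)
    (hΨ : OrdinalPotential u Ψ) {x y : ∀ i, A i} (h : BRStep u x y) : Ψ x ≤ Ψ y := by
  obtain ⟨hne, i, hbr, hoff⟩ := h
  have hy : update x i (y i) = y := by
    funext j
    rcases eq_or_ne j i with rfl | hj
    · simp
    · simp [update_of_ne hj, hoff j hj]
  have hux : u i x ≤ u i y := by
    have := hbr (x i)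
    rwa [update_eq_self, hy] at this
  by_contra hlt
  push_neg at hlt
  have := (hΨ i y x (fun j hj => hoff j hj)).mpr hlt
  linarith

private lemma psi_mono_path (u : ι → (∀ i, A i) → ℝ) (Ψ : (∀ i, A i) → ℝ)
    (hΨ : OrdinalPotential u Ψ) {x y : ∀ i, A i} (h : BRPath u x y) : Ψ x ≤ Ψ y := by
  induction h with
  | refl => exact le_refl _
  | tail _ hstep ih => exact ih.trans (psi_mono_step u Ψ hΨ hstep)

/-- In a finite ordinal potential game, from every configuration there is a best
response path to a recursive Nash equilibrium. -/
theorem brpath_to_recursive_nash (u : ι → (∀ i, A i) → ℝ) (Ψ : (∀ i, A i) → ℝ)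
    (hΨ : OrdinalPotential u Ψ) (x : ∀ i, A i) :
    ∃ y : ∀ i, A i, BRPath u x y ∧ Recursive u y ∧ ∀ i, IsBR u i y (y i) := by
  classical
  -- choose a reachable y minimizing the cardinality of its reachable set
  set f : (∀ i, A i) → ℕ := fun z => {w | BRPath u z w}.ncard with hf
  have hne : (Finset.univ.filter (fun z => BRPath u x z)).Nonempty :=
    ⟨x, Finset.mem_filter.mpr ⟨Finset.mem_univ _, Relation.ReflTransGen.refl⟩⟩
  obtain ⟨y, hy, hmin⟩ := Finset.exists_min_image _ f hne
  have hxy : BRPath u x y := (Finset.mem_filter.mp hy).2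
  have hrec : Recursive u y := by
    intro z hz
    have hxz : BRPath u x z := hxy.trans hz
    have hsub : {w | BRPath u z w} ⊆ {w | BRPath u y w} := fun w hw => hz.trans hw
    have hle : f y ≤ f z := hmin z (by simp [hxz])
    have heq : {w | BRPath u z w} = {w | BRPath u y w} :=
      Set.eq_of_subset_of_ncard_le hsub hle (Set.toFinite _)
    have : y ∈ {w | BRPath u z w} := heq ▸ (Relation.ReflTransGen.refl : BRPath u y y)
    exact this
  refine ⟨y, hxy, hrec, fun i => ?_⟩
  by_contra hnb
  simp only [IsBR, not_forall, not_le] at hnb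
  obtain ⟨b, hb⟩ := hnb
  rw [update_eq_self] at hb
  -- pick a best response a for player i
  obtain ⟨a, _, hamax⟩ := Finset.exists_max_image Finset.univ
    (fun c : A i => u i (update y i c)) ⟨y i, Finset.mem_univ _⟩
  have haBR : IsBR u i y a := fun c => hamax c (Finset.mem_univ _)
  set z := update y i a with hzdef
  have huy : u i y < u i z := lt_of_lt_of_le hb (hamax b (Finset.mem_univ _))
  have hne' : y ≠ z := fun h => absurd rfl (by rw [h] at huy; exact huy.ne)
  have hstep : BRStep u y z := by
    refine ⟨hne', i, ?_, fun j hj => update_of_ne hj _ _⟩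
    have : z i = a := update_self _ _ _
    rw [this]; exact haBR
  have hΨlt : Ψ y < Ψ z :=
    (hΨ i y z (fun j hj => (update_of_ne hj _ _).symm)).mp huy
  have hback : BRPath u z y := hrec z (Relation.ReflTransGen.single hstep)
  have := psi_mono_path u Ψ hΨ hback
  linarith
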